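/- arXiv:2001.10998 — 5 statements merged into one kernel-verified Lean document; each statement's English description precedes it below -/
import Mathlib

section
/- The functions H and J of the 1:(−2) resonance system are in involution: the canonical Poisson bracket {H, J} vanishes at every point of ℝ⁴. -/
noncomputable section

/-- Hamiltonian of the 1:(-2) resonance system on ℝ⁴ with coordinates (q₁, q₂, p₁, p₂). -/
def Hres (q1 q2 p1 p2 : ℝ) : ℝ :=
  2 * q1 * p1 * q2 + (q1 ^ 2 - p1 ^ 2) * p2
    + ((1 / 2) * (q1 ^ 2 + p1 ^ 2) + (q2 ^ 2 + p2 ^ 2)) ^ 2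

/-- Momentum of the 1:(-2) resonance system. -/
def Jres (q1 q2 p1 p2 : ℝ) : ℝ :=
  (1 / 2) * (q1 ^ 2 + p1 ^ 2) - (q2 ^ 2 + p2 ^ 2)

/-- Partial derivatives with respect to the four coordinates. -/
def pdq1 (F : ℝ → ℝ → ℝ → ℝ → ℝ) (q1 q2 p1 p2 : ℝ) : ℝ :=
  deriv (fun x => F x q2 p1 p2) q1

def pdq2 (F : ℝ → ℝ → ℝ → ℝ → ℝ) (q1 q2 p1 p2 : ℝ) : ℝ :=
  deriv (fun x => F q1 x p1 p2) q2

def pdp1 (F : ℝ → ℝ → ℝ → ℝ → ℝ) (q1 q2 p1 p2 : ℝ) : ℝ :=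
  deriv (fun x => F q1 q2 x p2) p1

def pdp2 (F : ℝ → ℝ → ℝ → ℝ → ℝ) (q1 q2 p1 p2 : ℝ) : ℝ :=
  deriv (fun x => F q1 q2 p1 x) p2

/-- The canonical Poisson bracket of two functions on ℝ⁴. -/
def poissonBracket (F G : ℝ → ℝ → ℝ → ℝ → ℝ) (q1 q2 p1 p2 : ℝ) : ℝ :=
  pdq1 F q1 q2 p1 p2 * pdp1 G q1 q2 p1 p2
    + pdq2 F q1 q2 p1 p2 * pdp2 G q1 q2 p1 p2
    - pdp1 F q1 q2 p1 p2 * pdq1 G q1 q2 p1 p2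
    - pdp2 F q1 q2 p1 p2 * pdq2 G q1 q2 p1 p2


abbrev Rr (q1 q2 p1 p2 : ℝ) : ℝ := (1 / 2) * (q1 ^ 2 + p1 ^ 2) + (q2 ^ 2 + p2 ^ 2)

lemma pdq1_H (q1 q2 p1 p2 : ℝ) :
    pdq1 Hres q1 q2 p1 p2 = 2 * p1 * q2 + 2 * q1 * p2 + 2 * Rr q1 q2 p1 p2 * q1 := by
  unfold pdq1 Hres
  have hx : HasDerivAt (fun x : ℝ => x) 1 q1 := hasDerivAt_id q1
  have h := ((((hx.const_mul 2).mul_const p1).mul_const q2).add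
      (((hx.pow 2).sub_const (p1 ^ 2)).mul_const p2)).add
      (((((hx.pow 2).add_const (p1 ^ 2)).const_mul (1/2:ℝ)).add_const (q2 ^ 2 + p2 ^ 2)).pow 2)
  erw [h.deriv]; unfold Rr; simp only [Pi.pow_apply]; ring

lemma pdp1_H (q1 q2 p1 p2 : ℝ) :
    pdp1 Hres q1 q2 p1 p2 = 2 * q1 * q2 - 2 * p1 * p2 + 2 * Rr q1 q2 p1 p2 * p1 := by
  unfold pdp1 Hres
  have hx : HasDerivAt (fun x : ℝ => x) 1 p1 := hasDerivAt_id p1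
  have h := (((hx.const_mul (2 * q1)).mul_const q2).add
      (((hx.pow 2).const_sub (q1 ^ 2)).mul_const p2)).add
      (((((hx.pow 2).const_add (q1 ^ 2)).const_mul (1/2:ℝ)).add_const (q2 ^ 2 + p2 ^ 2)).pow 2)
  have e : (fun x : ℝ => 2 * q1 * x * q2 + (q1 ^ 2 - x ^ 2) * p2
      + ((1/2) * (q1 ^ 2 + x ^ 2) + (q2 ^ 2 + p2 ^ 2)) ^ 2)
      = fun x : ℝ => 2 * q1 * x * q2 + (q1 ^ 2 - x ^ 2) * p2
      + ((1/2) * (q1 ^ 2 + x ^ 2) + (q2 ^ 2 + p2 ^ 2)) ^ 2 := rfl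
  rw [show (fun x : ℝ => 2 * q1 * x * q2 + (q1 ^ 2 - x ^ 2) * p2
      + ((1/2) * (q1 ^ 2 + x ^ 2) + (q2 ^ 2 + p2 ^ 2)) ^ 2)
      = (fun x : ℝ => 2 * q1 * x * q2 + ((q1 ^ 2 - x ^ 2) * p2
      + ((1/2) * (q1 ^ 2 + x ^ 2) + (q2 ^ 2 + p2 ^ 2)) ^ 2)) from by funext x; ring]
  have h2 := ((hx.const_mul (2 * q1)).mul_const q2).add
      ((((hx.pow 2).const_sub (q1 ^ 2)).mul_const p2).add
      (((((hx.pow 2).const_add (q1 ^ 2)).const_mul (1/2:ℝ)).add_const (q2 ^ 2 + p2 ^ 2)).pow 2))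
  erw [h2.deriv]; unfold Rr; simp only [Pi.pow_apply]; ring

lemma pdq2_H (q1 q2 p1 p2 : ℝ) :
    pdq2 Hres q1 q2 p1 p2 = 2 * q1 * p1 + 4 * Rr q1 q2 p1 p2 * q2 := by
  unfold pdq2 Hres
  have hx : HasDerivAt (fun x : ℝ => x) 1 q2 := hasDerivAt_id q2
  have h := (((hx.const_mul (2 * q1 * p1)).add_const ((q1 ^ 2 - p1 ^ 2) * p2)).add
      ((((hx.pow 2).add_const (p2 ^ 2)).const_add ((1/2:ℝ) * (q1 ^ 2 + p1 ^ 2))).pow 2))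
  erw [h.deriv]; unfold Rr; simp only [Pi.pow_apply]; ring

lemma pdp2_H (q1 q2 p1 p2 : ℝ) :
    pdp2 Hres q1 q2 p1 p2 = (q1 ^ 2 - p1 ^ 2) + 4 * Rr q1 q2 p1 p2 * p2 := by
  unfold pdp2 Hres
  have hx : HasDerivAt (fun x : ℝ => x) 1 p2 := hasDerivAt_id p2
  have h := (((hx.const_mul (q1 ^ 2 - p1 ^ 2)).const_add (2 * q1 * p1 * q2)).add
      ((((hx.pow 2).const_add (q2 ^ 2)).const_add ((1/2:ℝ) * (q1 ^ 2 + p1 ^ 2))).pow 2))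
  rw [show (fun x : ℝ => 2 * q1 * p1 * q2 + (q1 ^ 2 - p1 ^ 2) * x
      + ((1/2) * (q1 ^ 2 + p1 ^ 2) + (q2 ^ 2 + x ^ 2)) ^ 2)
      = (fun x : ℝ => (2 * q1 * p1 * q2 + (q1 ^ 2 - p1 ^ 2) * x)
      + ((1/2) * (q1 ^ 2 + p1 ^ 2) + (q2 ^ 2 + x ^ 2)) ^ 2) from by funext x; ring]
  erw [h.deriv]; unfold Rr; simp only [Pi.pow_apply]; ring

lemma pdq1_J (q1 q2 p1 p2 : ℝ) : pdq1 Jres q1 q2 p1 p2 = q1 := by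
  unfold pdq1 Jres
  have hx : HasDerivAt (fun x : ℝ => x) 1 q1 := hasDerivAt_id q1
  have h := (((hx.pow 2).add_const (p1 ^ 2)).const_mul (1/2:ℝ)).sub_const (q2 ^ 2 + p2 ^ 2)
  erw [h.deriv]; ring

lemma pdp1_J (q1 q2 p1 p2 : ℝ) : pdp1 Jres q1 q2 p1 p2 = p1 := by
  unfold pdp1 Jres
  have hx : HasDerivAt (fun x : ℝ => x) 1 p1 := hasDerivAt_id p1
  have h := (((hx.pow 2).const_add (q1 ^ 2)).const_mul (1/2:ℝ)).sub_const (q2 ^ 2 + p2 ^ 2)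
  erw [h.deriv]; ring

lemma pdq2_J (q1 q2 p1 p2 : ℝ) : pdq2 Jres q1 q2 p1 p2 = -2 * q2 := by
  unfold pdq2 Jres
  have hx : HasDerivAt (fun x : ℝ => x) 1 q2 := hasDerivAt_id q2
  have h := HasDerivAt.const_sub ((1/2:ℝ) * (q1 ^ 2 + p1 ^ 2)) ((hx.pow 2).add_const (p2 ^ 2))
  erw [h.deriv]; ring

lemma pdp2_J (q1 q2 p1 p2 : ℝ) : pdp2 Jres q1 q2 p1 p2 = -2 * p2 := by
  unfold pdp2 Jres
  have hx : HasDerivAt (fun x : ℝ => x) 1 p2 := hasDerivAt_id p2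
  have h := HasDerivAt.const_sub ((1/2:ℝ) * (q1 ^ 2 + p1 ^ 2)) ((hx.pow 2).const_add (q2 ^ 2))
  erw [h.deriv]; ring

/-- The functions H and J of the 1:(-2) resonance system are in involution. -/
theorem resonance_H_J_in_involution (q1 q2 p1 p2 : ℝ) :
    poissonBracket Hres Jres q1 q2 p1 p2 = 0 := by
  unfold poissonBracket
  rw [pdq1_H, pdp1_H, pdq2_H, pdp2_H, pdq1_J, pdp1_J, pdq2_J, pdp2_J]
  ring
end
end

section
/- For every 0 < ε < 2, the energy level of the spherical pendulum below the critical value, namely the set {(q, p) ∈ ℝ³ × ℝ³ : ‖q‖ = 1, ⟨q, p⟩ = 0, (1/2)‖p‖² + q₃ = 1 − ε}, is homeomorphic to the unit 3-sphere S³ = {x ∈ ℝ⁴ : ‖x‖ = 1}. -/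
noncomputable section

namespace SPaux

open Real

abbrev E3 : Type := EuclideanSpace ℝ (Fin 3)
abbrev E4 : Type := EuclideanSpace ℝ (Fin 4)

/-- r₀ = (1+h)/(1-h) -/
def r0 (h : ℝ) : ℝ := (1 + h) / (1 - h)

/-- scaling factor t(r) -/
def T (h r : ℝ) : ℝ := Real.sqrt (2 / (r0 h * (1 - h) * (1 + r)))

def U1 (x : E3 × E3) : ℝ := x.1 0 / (1 - x.1 2)
def U2 (x : E3 × E3) : ℝ := x.1 1 / (1 - x.1 2)
def W1 (x : E3 × E3) : ℝ := (x.2 0 * (1 - x.1 2) + x.1 0 * x.2 2) / (1 - x.1 2) ^ 2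
def W2 (x : E3 × E3) : ℝ := (x.2 1 * (1 - x.1 2) + x.1 1 * x.2 2) / (1 - x.1 2) ^ 2
def R (x : E3 × E3) : ℝ := U1 x ^ 2 + U2 x ^ 2

def F (h : ℝ) (x : E3 × E3) : E4 :=
  (WithLp.equiv 2 (Fin 4 → ℝ)).symm
    ![U1 x / Real.sqrt (r0 h), U2 x / Real.sqrt (r0 h),
      W1 x * T h (R x), W2 x * T h (R x)]

def gr (h : ℝ) (a : E4) : ℝ := r0 h * (a 0 ^ 2 + a 1 ^ 2)
def gu1 (h : ℝ) (a : E4) : ℝ := Real.sqrt (r0 h) * a 0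
def gu2 (h : ℝ) (a : E4) : ℝ := Real.sqrt (r0 h) * a 1
def gw1 (h : ℝ) (a : E4) : ℝ := a 2 / T h (gr h a)
def gw2 (h : ℝ) (a : E4) : ℝ := a 3 / T h (gr h a)
def gm (h : ℝ) (a : E4) : ℝ := gu1 h a * gw1 h a + gu2 h a * gw2 h a

def G (h : ℝ) (a : E4) : E3 × E3 :=
  ((WithLp.equiv 2 (Fin 3 → ℝ)).symm
      ![2 * gu1 h a / (1 + gr h a), 2 * gu2 h a / (1 + gr h a),
        (gr h a - 1) / (1 + gr h a)],
   (WithLp.equiv 2 (Fin 3 → ℝ)).symm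
      ![2 * gw1 h a / (1 + gr h a) - 4 * gu1 h a * gm h a / (1 + gr h a) ^ 2,
        2 * gw2 h a / (1 + gr h a) - 4 * gu2 h a * gm h a / (1 + gr h a) ^ 2,
        4 * gm h a / (1 + gr h a) ^ 2])

section lemmas

lemma norm_sq_E3 (v : E3) : ‖v‖ ^ 2 = v 0 ^ 2 + v 1 ^ 2 + v 2 ^ 2 := by
  rw [EuclideanSpace.norm_sq_eq]
  simp [Fin.sum_univ_three, sq]

lemma norm_sq_E4 (v : E4) : ‖v‖ ^ 2 = v 0 ^ 2 + v 1 ^ 2 + v 2 ^ 2 + v 3 ^ 2 := by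
  rw [EuclideanSpace.norm_sq_eq]
  simp [Fin.sum_univ_four, sq]

lemma inner_E3 (v w : E3) : (inner ℝ v w : ℝ) = v 0 * w 0 + v 1 * w 1 + v 2 * w 2 := by
  simp [PiLp.inner_apply, RCLike.inner_apply, Fin.sum_univ_three]
  ring

variable {h : ℝ} (hm1 : -1 < h) (h1 : h < 1)
include hm1 h1

lemma r0_pos : 0 < r0 h := div_pos (by linarith) (by linarith)

lemma one_sub_h_pos : (0:ℝ) < 1 - h := by linarith

lemma denom_pos {r : ℝ} (hr : 0 ≤ r) : 0 < r0 h * (1 - h) * (1 + r) := by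
  have h0 := r0_pos (h:=h) hm1 h1
  have h2 : (0:ℝ) < 1 - h := by linarith
  have h3 : (0:ℝ) < 1 + r := by linarith
  positivity

lemma T_pos {r : ℝ} (hr : 0 ≤ r) : 0 < T h r :=
  Real.sqrt_pos.mpr (div_pos two_pos (denom_pos hm1 h1 hr))

lemma T_sq {r : ℝ} (hr : 0 ≤ r) : T h r ^ 2 = 2 / (r0 h * (1 - h) * (1 + r)) :=
  Real.sq_sqrt (le_of_lt (div_pos two_pos (denom_pos hm1 h1 hr)))

/-- the energy level set -/
def Eset (h : ℝ) : Set (E3 × E3) :=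
  {x | ‖x.1‖ = 1 ∧ (inner ℝ x.1 x.2 : ℝ) = 0 ∧ (1/2) * ‖x.2‖ ^ 2 + x.1 2 = h}



lemma mem_facts {x : E3 × E3} (hx : x ∈ Eset h) :
    x.1 0 ^ 2 + x.1 1 ^ 2 + x.1 2 ^ 2 = 1 ∧
    x.1 0 * x.2 0 + x.1 1 * x.2 1 + x.1 2 * x.2 2 = 0 ∧
    x.2 0 ^ 2 + x.2 1 ^ 2 + x.2 2 ^ 2 = 2 * (h - x.1 2) ∧
    0 < 1 - x.1 2 := by
  obtain ⟨h1', h2', h3'⟩ := hx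
  have nq : x.1 0 ^ 2 + x.1 1 ^ 2 + x.1 2 ^ 2 = 1 := by
    have := norm_sq_E3 x.1
    rw [h1'] at this; linarith
  have en : x.2 0 ^ 2 + x.2 1 ^ 2 + x.2 2 ^ 2 = 2 * (h - x.1 2) := by
    have := norm_sq_E3 x.2
    rw [this] at h3'; linarith
  have orth : x.1 0 * x.2 0 + x.1 1 * x.2 1 + x.1 2 * x.2 2 = 0 := by
    rw [inner_E3] at h2'; exact h2'
  refine ⟨nq, orth, en, ?_⟩
  nlinarith [sq_nonneg (x.2 0), sq_nonneg (x.2 1), sq_nonneg (x.2 2), sq_nonneg (x.1 2)]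

lemma key_vals {x : E3 × E3} (hx : x ∈ Eset h) :
    R x = (1 + x.1 2) / (1 - x.1 2) ∧
    1 + R x = 2 / (1 - x.1 2) ∧
    W1 x ^ 2 + W2 x ^ 2 = 2 * (h - x.1 2) / (1 - x.1 2) ^ 2 := by
  obtain ⟨nq, orth, en, hs⟩ := mem_facts hm1 h1 hx
  have hsne : (1 - x.1 2) ≠ 0 := ne_of_gt hs
  have c3' : (x.2 0 * (1 - x.1 2) + x.1 0 * x.2 2) ^ 2 + (x.2 1 * (1 - x.1 2) + x.1 1 * x.2 2) ^ 2
      = 2 * (h - x.1 2) * (1 - x.1 2) ^ 2 := by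
    linear_combination ((1 - x.1 2)^2) * en + (2*(1 - x.1 2)*(x.2 2)) * orth + (x.2 2 ^2) * nq
  refine ⟨?_, ?_, ?_⟩
  · unfold R U1 U2
    field_simp
    linear_combination nq
  · unfold R U1 U2
    field_simp
    linear_combination nq
  · unfold W1 W2
    rw [div_pow, div_pow, ← add_div, c3']
    field_simp

lemma F_mem_sphere {x : E3 × E3} (hx : x ∈ Eset h) :
    F h x ∈ Metric.sphere (0 : E4) 1 := by
  rw [mem_sphere_zero_iff_norm]
  have hRnn : 0 ≤ R x := by unfold R; positivity
  have hsq : ‖F h x‖ ^ 2 = 1 := by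
    rw [norm_sq_E4]
    have e0 : F h x 0 = U1 x / Real.sqrt (r0 h) := rfl
    have e1 : F h x 1 = U2 x / Real.sqrt (r0 h) := rfl
    have e2 : F h x 2 = W1 x * T h (R x) := rfl
    have e3 : F h x 3 = W2 x * T h (R x) := rfl
    rw [e0, e1, e2, e3, div_pow, div_pow, mul_pow, mul_pow,
      Real.sq_sqrt (le_of_lt (r0_pos hm1 h1)), T_sq hm1 h1 hRnn]
    obtain ⟨hRv, hR1, hWv⟩ := key_vals hm1 h1 hx
    obtain ⟨nq, orth, en, hs⟩ := mem_facts hm1 h1 hx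
    have hsne : (1 - x.1 2) ≠ 0 := ne_of_gt hs
    have hhne : (1 - h) ≠ 0 := ne_of_gt (by linarith)
    have hhne' : (1 + h) ≠ 0 := ne_of_gt (by linarith)
    rw [hR1]
    have main : R x / r0 h + (W1 x ^ 2 + W2 x ^ 2) *
        (2 / (r0 h * (1 - h) * (2 / (1 - x.1 2)))) = 1 := by
      rw [hRv, hWv]; unfold r0; field_simp; ring
    unfold R at main
    linear_combination main
  have hnn := norm_nonneg (F h x)
  nlinarith [hsq, hnn]


omit hm1 h1 in
lemma norm_eq_one_of_sq {n : ℕ} {v : EuclideanSpace ℝ (Fin n)} (hv : ‖v‖ ^ 2 = 1) :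
    ‖v‖ = 1 := by
  nlinarith [norm_nonneg v]

lemma gr_nonneg (a : E4) : 0 ≤ gr h a := by
  have := r0_pos (h := h) hm1 h1
  unfold gr; positivity

lemma grho_pos (a : E4) : 0 < 1 + gr h a := by
  have := gr_nonneg hm1 h1 a; linarith

lemma gu_sq (a : E4) : gu1 h a ^ 2 + gu2 h a ^ 2 = gr h a := by
  unfold gu1 gu2 gr
  have := r0_pos (h := h) hm1 h1
  rw [mul_pow, mul_pow, Real.sq_sqrt this.le]; ring

lemma gw_sq {a : E4} (ha : a ∈ Metric.sphere (0 : E4) 1) :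
    gw1 h a ^ 2 + gw2 h a ^ 2 = (r0 h - gr h a) * (1 - h) * (1 + gr h a) / 2 := by
  have hna : a 0 ^ 2 + a 1 ^ 2 + a 2 ^ 2 + a 3 ^ 2 = 1 := by
    rw [mem_sphere_zero_iff_norm] at ha
    have := norm_sq_E4 a
    rw [ha] at this; linarith
  have htp := T_pos hm1 h1 (gr_nonneg hm1 h1 a)
  have hts := T_sq hm1 h1 (gr_nonneg hm1 h1 a)
  have hd := denom_pos hm1 h1 (gr_nonneg hm1 h1 a)
  have hr0 := r0_pos (h := h) hm1 h1
  unfold gw1 gw2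
  rw [div_pow, div_pow, ← add_div, hts]
  have h23 : a 2 ^ 2 + a 3 ^ 2 = 1 - (a 0 ^ 2 + a 1 ^ 2) := by linarith
  rw [h23]
  have hgr : a 0 ^ 2 + a 1 ^ 2 = gr h a / r0 h := by
    unfold gr; field_simp
  rw [hgr]
  field_simp

lemma hr0_id : r0 h * (1 - h) = 1 + h := by
  unfold r0
  rw [div_mul_cancel₀]
  exact ne_of_gt (by linarith)

lemma G_mem_Eset {a : E4} (ha : a ∈ Metric.sphere (0 : E4) 1) :
    G h a ∈ Eset h := by
  have hρ := grho_pos hm1 h1 a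
  have hρne : (1 + gr h a) ≠ 0 := ne_of_gt hρ
  have hu := gu_sq hm1 h1 a
  have hw := gw_sq hm1 h1 ha
  have hmdef : gm h a = gu1 h a * gw1 h a + gu2 h a * gw2 h a := rfl
  have e0 : (G h a).1 0 = 2 * gu1 h a / (1 + gr h a) := rfl
  have e1 : (G h a).1 1 = 2 * gu2 h a / (1 + gr h a) := rfl
  have e2 : (G h a).1 2 = (gr h a - 1) / (1 + gr h a) := rfl
  have f0 : (G h a).2 0 = 2 * gw1 h a / (1 + gr h a) - 4 * gu1 h a * gm h a / (1 + gr h a) ^ 2 := rfl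
  have f1 : (G h a).2 1 = 2 * gw2 h a / (1 + gr h a) - 4 * gu2 h a * gm h a / (1 + gr h a) ^ 2 := rfl
  have f2 : (G h a).2 2 = 4 * gm h a / (1 + gr h a) ^ 2 := rfl
  have g0 : (G h a).2 0 = (2 * gw1 h a * (1 + gr h a) - 4 * gu1 h a * gm h a) / (1 + gr h a) ^ 2 := by
    rw [f0]; field_simp
  have g1 : (G h a).2 1 = (2 * gw2 h a * (1 + gr h a) - 4 * gu2 h a * gm h a) / (1 + gr h a) ^ 2 := by
    rw [f1]; field_simp
  have hnum : (2 * gw1 h a * (1 + gr h a) - 4 * gu1 h a * gm h a) ^ 2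
      + (2 * gw2 h a * (1 + gr h a) - 4 * gu2 h a * gm h a) ^ 2 + (4 * gm h a) ^ 2
      = 4 * (gw1 h a ^ 2 + gw2 h a ^ 2) * (1 + gr h a) ^ 2 := by
    linear_combination (16 * gm h a ^ 2) * hu + (16 * (1 + gr h a) * gm h a) * hmdef
  have hp : (G h a).2 0 ^ 2 + (G h a).2 1 ^ 2 + (G h a).2 2 ^ 2
      = 4 * (gw1 h a ^ 2 + gw2 h a ^ 2) / (1 + gr h a) ^ 2 := by
    rw [g0, g1, f2, div_pow, div_pow, div_pow, ← add_div, ← add_div, hnum]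
    field_simp
  refine ⟨?_, ?_, ?_⟩
  · apply norm_eq_one_of_sq
    rw [norm_sq_E3, e0, e1, e2]
    field_simp
    linear_combination 4 * hu
  · rw [inner_E3, e0, e1, e2, g0, g1, f2]
    have hinner : 2 * gu1 h a * (2 * gw1 h a * (1 + gr h a) - 4 * gu1 h a * gm h a)
        + 2 * gu2 h a * (2 * gw2 h a * (1 + gr h a) - 4 * gu2 h a * gm h a)
        + (gr h a - 1) * (4 * gm h a) = 0 := by
      linear_combination (-8 * gm h a) * hu + (-4 * (1 + gr h a)) * hmdef
    rw [div_mul_div_comm, div_mul_div_comm, div_mul_div_comm, ← add_div,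
      ← add_div, hinner, zero_div]
  · rw [norm_sq_E3, hp, e2, hw]
    have hid := hr0_id (h := h) hm1 h1
    field_simp
    linear_combination 4 * hid
  
lemma G_F {x : E3 × E3} (hx : x ∈ Eset h) : G h (F h x) = x := by
  obtain ⟨nq, orth, en, hs⟩ := mem_facts hm1 h1 hx
  obtain ⟨hRv, hR1, hWv⟩ := key_vals hm1 h1 hx
  have hsne : (1 - x.1 2) ≠ 0 := ne_of_gt hs
  have hr0 := r0_pos (h := h) hm1 h1
  have hsr0 : Real.sqrt (r0 h) ≠ 0 := ne_of_gt (Real.sqrt_pos.mpr hr0)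
  have hRnn : 0 ≤ R x := by unfold R; positivity
  have htne : T h (R x) ≠ 0 := ne_of_gt (T_pos hm1 h1 hRnn)
  have ha0 : F h x 0 = U1 x / Real.sqrt (r0 h) := rfl
  have ha1 : F h x 1 = U2 x / Real.sqrt (r0 h) := rfl
  have ha2 : F h x 2 = W1 x * T h (R x) := rfl
  have ha3 : F h x 3 = W2 x * T h (R x) := rfl
  have hgr : gr h (F h x) = R x := by
    unfold gr
    rw [ha0, ha1, div_pow, div_pow, Real.sq_sqrt hr0.le, ← add_div,
      mul_div_cancel₀ _ (ne_of_gt hr0)]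
    rfl
  have hgu1 : gu1 h (F h x) = U1 x := by
    unfold gu1; rw [ha0, mul_comm, div_mul_cancel₀ _ hsr0]
  have hgu2 : gu2 h (F h x) = U2 x := by
    unfold gu2; rw [ha1, mul_comm, div_mul_cancel₀ _ hsr0]
  have hgw1 : gw1 h (F h x) = W1 x := by
    unfold gw1; rw [ha2, hgr, mul_div_cancel_right₀ _ htne]
  have hgw2 : gw2 h (F h x) = W2 x := by
    unfold gw2; rw [ha3, hgr, mul_div_cancel_right₀ _ htne]
  have hgm : gm h (F h x) = x.2 2 / (1 - x.1 2) ^ 2 := by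
    unfold gm
    rw [hgu1, hgu2, hgw1, hgw2]
    unfold U1 U2 W1 W2
    field_simp
    linear_combination (1 - x.1 2) * orth + x.2 2 * nq
  have key : ∀ i, (G h (F h x)).1 i = x.1 i ∧ (G h (F h x)).2 i = x.2 i := by
    intro i
    fin_cases i
    · constructor
      · show 2 * gu1 h (F h x) / (1 + gr h (F h x)) = x.1 0
        rw [hgu1, hgr, hR1]
        unfold U1
        field_simp
      · show 2 * gw1 h (F h x) / (1 + gr h (F h x))
            - 4 * gu1 h (F h x) * gm h (F h x) / (1 + gr h (F h x)) ^ 2 = x.2 0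
        rw [hgw1, hgu1, hgm, hgr, hR1]
        unfold U1 W1
        field_simp
        ring
    · constructor
      · show 2 * gu2 h (F h x) / (1 + gr h (F h x)) = x.1 1
        rw [hgu2, hgr, hR1]
        unfold U2
        field_simp
      · show 2 * gw2 h (F h x) / (1 + gr h (F h x))
            - 4 * gu2 h (F h x) * gm h (F h x) / (1 + gr h (F h x)) ^ 2 = x.2 1
        rw [hgw2, hgu2, hgm, hgr, hR1]
        unfold U2 W2
        field_simp
        ring
    · constructor
      · show (gr h (F h x) - 1) / (1 + gr h (F h x)) = x.1 2
        rw [hgr, hR1, hRv]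
        field_simp
        ring
      · show 4 * gm h (F h x) / (1 + gr h (F h x)) ^ 2 = x.2 2
        rw [hgm, hgr, hR1]
        field_simp
        ring
  exact Prod.ext (PiLp.ext fun i => (key i).1) (PiLp.ext fun i => (key i).2)

lemma F_G {a : E4} (ha : a ∈ Metric.sphere (0 : E4) 1) : F h (G h a) = a := by
  have hρ := grho_pos hm1 h1 a
  have hρne : (1 + gr h a) ≠ 0 := ne_of_gt hρ
  have hu := gu_sq hm1 h1 a
  have hr0 := r0_pos (h := h) hm1 h1
  have hsr0 : Real.sqrt (r0 h) ≠ 0 := ne_of_gt (Real.sqrt_pos.mpr hr0)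
  have htne : T h (gr h a) ≠ 0 := ne_of_gt (T_pos hm1 h1 (gr_nonneg hm1 h1 a))
  have e0 : (G h a).1 0 = 2 * gu1 h a / (1 + gr h a) := rfl
  have e1 : (G h a).1 1 = 2 * gu2 h a / (1 + gr h a) := rfl
  have e2 : (G h a).1 2 = (gr h a - 1) / (1 + gr h a) := rfl
  have f0 : (G h a).2 0 = 2 * gw1 h a / (1 + gr h a) - 4 * gu1 h a * gm h a / (1 + gr h a) ^ 2 := rfl
  have f1 : (G h a).2 1 = 2 * gw2 h a / (1 + gr h a) - 4 * gu2 h a * gm h a / (1 + gr h a) ^ 2 := rfl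
  have f2 : (G h a).2 2 = 4 * gm h a / (1 + gr h a) ^ 2 := rfl
  have hs' : 1 - (G h a).1 2 = 2 / (1 + gr h a) := by
    rw [e2]; field_simp; ring
  have hU1 : U1 (G h a) = gu1 h a := by
    unfold U1; rw [e0, hs']; field_simp
  have hU2 : U2 (G h a) = gu2 h a := by
    unfold U2; rw [e1, hs']; field_simp
  have hR : R (G h a) = gr h a := by
    unfold R; rw [hU1, hU2]; exact hu
  have hW1 : W1 (G h a) = gw1 h a := by
    unfold W1; rw [f0, f2, e0, hs']; field_simp; ring
  have hW2 : W2 (G h a) = gw2 h a := by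
    unfold W2; rw [f1, f2, e1, hs']; field_simp; ring
  have key : ∀ i, F h (G h a) i = a i := by
    intro i
    fin_cases i
    · show U1 (G h a) / Real.sqrt (r0 h) = a 0
      rw [hU1]; unfold gu1; rw [mul_div_cancel_left₀ _ hsr0]
    · show U2 (G h a) / Real.sqrt (r0 h) = a 1
      rw [hU2]; unfold gu2; rw [mul_div_cancel_left₀ _ hsr0]
    · show W1 (G h a) * T h (R (G h a)) = a 2
      rw [hW1, hR]; unfold gw1; rw [div_mul_cancel₀ _ htne]
    · show W2 (G h a) * T h (R (G h a)) = a 3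
      rw [hW2, hR]; unfold gw2; rw [div_mul_cancel₀ _ htne]
  exact PiLp.ext key

omit hm1 h1 in
lemma cont_coord3 (i : Fin 3) : Continuous (fun v : E3 => v i) :=
  (continuous_apply i).comp (PiLp.continuous_ofLp _ _)

omit hm1 h1 in
lemma cont_coord4 (i : Fin 4) : Continuous (fun v : E4 => v i) :=
  (continuous_apply i).comp (PiLp.continuous_ofLp _ _)

omit hm1 h1 in
lemma cont_mk3 {α : Type*} [TopologicalSpace α] {f g k : α → ℝ}
    (hf : Continuous f) (hg : Continuous g) (hk : Continuous k) :
    Continuous (fun x => ((WithLp.equiv 2 (Fin 3 → ℝ)).symm ![f x, g x, k x] : E3)) := by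
  apply (PiLp.continuous_toLp _ _).comp
  apply continuous_pi
  intro i
  fin_cases i <;> simpa

omit hm1 h1 in
lemma cont_mk4 {α : Type*} [TopologicalSpace α] {f g k l : α → ℝ}
    (hf : Continuous f) (hg : Continuous g) (hk : Continuous k) (hl : Continuous l) :
    Continuous (fun x => ((WithLp.equiv 2 (Fin 4 → ℝ)).symm ![f x, g x, k x, l x] : E4)) := by
  apply (PiLp.continuous_toLp _ _).comp
  apply continuous_pi
  intro i
  fin_cases i <;> simpa

lemma cont_G : Continuous (G h) := by
  have hc : ∀ i, Continuous (fun a : E4 => a i) := cont_coord4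
  have hcgr : Continuous (gr h) := by
    unfold gr
    exact continuous_const.mul (((hc 0).pow 2).add ((hc 1).pow 2))
  have hρne : ∀ a : E4, (1 + gr h a) ≠ 0 := fun a => ne_of_gt (grho_pos hm1 h1 a)
  have hcρ : Continuous (fun a : E4 => 1 + gr h a) := continuous_const.add hcgr
  have hcρ2 : Continuous (fun a : E4 => (1 + gr h a) ^ 2) := hcρ.pow 2
  have hρ2ne : ∀ a : E4, ((1 + gr h a) ^ 2) ≠ 0 := fun a => pow_ne_zero _ (hρne a)
  have hcT : Continuous (fun a : E4 => T h (gr h a)) := by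
    unfold T
    exact Real.continuous_sqrt.comp
      (continuous_const.div (continuous_const.mul hcρ)
        (fun a => by
          have := denom_pos hm1 h1 (gr_nonneg hm1 h1 a)
          exact ne_of_gt this))
  have hTne : ∀ a : E4, T h (gr h a) ≠ 0 := fun a => ne_of_gt (T_pos hm1 h1 (gr_nonneg hm1 h1 a))
  have hcgu1 : Continuous (gu1 h) := continuous_const.mul (hc 0)
  have hcgu2 : Continuous (gu2 h) := continuous_const.mul (hc 1)
  have hcgw1 : Continuous (gw1 h) := (hc 2).div hcT hTne
  have hcgw2 : Continuous (gw2 h) := (hc 3).div hcT hTne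
  have hcgm : Continuous (gm h) := (hcgu1.mul hcgw1).add (hcgu2.mul hcgw2)
  unfold G
  apply Continuous.prodMk
  · exact cont_mk3 (((continuous_const.mul hcgu1).div hcρ hρne))
      (((continuous_const.mul hcgu2).div hcρ hρne))
      (((hcgr.sub continuous_const).div hcρ hρne))
  · exact cont_mk3
      ((((continuous_const.mul hcgw1).div hcρ hρne)).sub
        (((continuous_const.mul hcgu1).mul hcgm).div hcρ2 hρ2ne))
      ((((continuous_const.mul hcgw2).div hcρ hρne)).sub
        (((continuous_const.mul hcgu2).mul hcgm).div hcρ2 hρ2ne))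
      ((continuous_const.mul hcgm).div hcρ2 hρ2ne)

lemma cont_F_on : Continuous (fun y : (Eset h) => F h y.1) := by
  have hval : Continuous (fun y : (Eset h) => (y.1 : E3 × E3)) := continuous_subtype_val
  have hq : ∀ i : Fin 3, Continuous (fun y : (Eset h) => y.1.1 i) :=
    fun i => (cont_coord3 i).comp (continuous_fst.comp hval)
  have hp : ∀ i : Fin 3, Continuous (fun y : (Eset h) => y.1.2 i) :=
    fun i => (cont_coord3 i).comp (continuous_snd.comp hval)
  have hs : Continuous (fun y : (Eset h) => 1 - y.1.1 2) := continuous_const.sub (hq 2)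
  have hsne : ∀ y : (Eset h), (1 - y.1.1 2) ≠ 0 :=
    fun y => ne_of_gt (mem_facts hm1 h1 y.2).2.2.2
  have hs2ne : ∀ y : (Eset h), ((1 - y.1.1 2) ^ 2) ≠ 0 := fun y => pow_ne_zero _ (hsne y)
  have hU1 : Continuous (fun y : (Eset h) => U1 y.1) := (hq 0).div hs hsne
  have hU2 : Continuous (fun y : (Eset h) => U2 y.1) := (hq 1).div hs hsne
  have hW1 : Continuous (fun y : (Eset h) => W1 y.1) :=
    (((hp 0).mul hs).add ((hq 0).mul (hp 2))).div (hs.pow 2) hs2ne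
  have hW2 : Continuous (fun y : (Eset h) => W2 y.1) :=
    (((hp 1).mul hs).add ((hq 1).mul (hp 2))).div (hs.pow 2) hs2ne
  have hR : Continuous (fun y : (Eset h) => R y.1) := (hU1.pow 2).add (hU2.pow 2)
  have hRnn : ∀ y : (Eset h), 0 ≤ R y.1 := by
    intro y; unfold R; positivity
  have hT : Continuous (fun y : (Eset h) => T h (R y.1)) := by
    unfold T
    exact Real.continuous_sqrt.comp
      (continuous_const.div (continuous_const.mul (continuous_const.add hR))
        (fun y => ne_of_gt (denom_pos hm1 h1 (hRnn y))))
  unfold F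
  exact cont_mk4 (hU1.div_const _) (hU2.div_const _) (hW1.mul hT) (hW2.mul hT)

end lemmas

end SPaux

end

noncomputable section

/-- For every 0 < ε < 2 the energy level
{(q, p) : ‖q‖ = 1, ⟨q, p⟩ = 0, (1/2)‖p‖² + q₃ = 1 − ε} of the spherical
pendulum below the critical value is homeomorphic to the unit 3-sphere. -/
theorem energy_level_below_homeomorphic_S3 (ε : ℝ) (hε0 : 0 < ε) (hε2 : ε < 2) :
    Nonempty
      (({x : EuclideanSpace ℝ (Fin 3) × EuclideanSpace ℝ (Fin 3) |
          ‖x.1‖ = 1 ∧ (inner ℝ x.1 x.2 : ℝ) = 0 ∧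
            (1 / 2) * ‖x.2‖ ^ 2 + x.1 2 = 1 - ε} : Set _) ≃ₜ
        (Metric.sphere (0 : EuclideanSpace ℝ (Fin 4)) 1)) := by
  have hm1 : -1 < 1 - ε := by linarith
  have h1 : 1 - ε < 1 := by linarith
  exact ⟨{
    toFun := fun x => ⟨SPaux.F (1 - ε) x.1, SPaux.F_mem_sphere hm1 h1 x.2⟩
    invFun := fun a => ⟨SPaux.G (1 - ε) a.1, SPaux.G_mem_Eset hm1 h1 a.2⟩
    left_inv := fun x => Subtype.ext (SPaux.G_F hm1 h1 x.2)
    right_inv := fun a => Subtype.ext (SPaux.F_G hm1 h1 a.2)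
    continuous_toFun := Continuous.subtype_mk (SPaux.cont_F_on hm1 h1) _
    continuous_invFun :=
      Continuous.subtype_mk ((SPaux.cont_G hm1 h1).comp continuous_subtype_val) _ }⟩

end
end

section
/- For every ε > 0, the energy level of the spherical pendulum above the critical value, namely the set {(q, p) ∈ ℝ³ × ℝ³ : ‖q‖ = 1, ⟨q, p⟩ = 0, (1/2)‖p‖² + q₃ = 1 + ε}, is homeomorphic to the unit cotangent bundle T*₁S² = {(q, p) ∈ ℝ³ × ℝ³ : ‖q‖ = 1, ⟨q, p⟩ = 0, ‖p‖ = 1}. -/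
noncomputable section

set_option maxHeartbeats 1000000 in
/-- For every ε > 0 the energy level
{(q, p) : ‖q‖ = 1, ⟨q, p⟩ = 0, (1/2)‖p‖² + q₃ = 1 + ε} of the spherical
pendulum above the critical value is homeomorphic to the unit cotangent
bundle T*₁S² = {(q, p) : ‖q‖ = 1, ⟨q, p⟩ = 0, ‖p‖ = 1}. -/
theorem energy_level_above_homeomorphic_unit_cotangent (ε : ℝ) (hε : 0 < ε) :
    Nonempty
      (({x : EuclideanSpace ℝ (Fin 3) × EuclideanSpace ℝ (Fin 3) |
          ‖x.1‖ = 1 ∧ (inner ℝ x.1 x.2 : ℝ) = 0 ∧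
            (1 / 2) * ‖x.2‖ ^ 2 + x.1 2 = 1 + ε} : Set _) ≃ₜ
        ({x : EuclideanSpace ℝ (Fin 3) × EuclideanSpace ℝ (Fin 3) |
          ‖x.1‖ = 1 ∧ (inner ℝ x.1 x.2 : ℝ) = 0 ∧ ‖x.2‖ = 1} : Set _)) := by
  have hcoord : ∀ q : EuclideanSpace ℝ (Fin 3), ‖q‖ = 1 → q 2 ≤ 1 := by
    intro q hq
    have h := abs_real_inner_le_norm (EuclideanSpace.single (2 : Fin 3) (1 : ℝ)) q
    simp [EuclideanSpace.inner_single_left, EuclideanSpace.norm_single, hq] at h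
    exact (le_abs_self _).trans h
  set c : EuclideanSpace ℝ (Fin 3) → ℝ := fun q => Real.sqrt (2 * (1 + ε - q 2)) with hc
  have hpos : ∀ q : EuclideanSpace ℝ (Fin 3), ‖q‖ = 1 → 0 < 2 * (1 + ε - q 2) := by
    intro q hq
    have := hcoord q hq
    nlinarith
  have hcpos : ∀ q : EuclideanSpace ℝ (Fin 3), ‖q‖ = 1 → 0 < c q := fun q hq =>
    Real.sqrt_pos.2 (hpos q hq)
  have hcsq : ∀ q : EuclideanSpace ℝ (Fin 3), ‖q‖ = 1 → c q ^ 2 = 2 * (1 + ε - q 2) := fun q hq =>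
    Real.sq_sqrt (hpos q hq).le
  have hnorm : ∀ x : EuclideanSpace ℝ (Fin 3) × EuclideanSpace ℝ (Fin 3),
      ‖x.1‖ = 1 → (1 / 2) * ‖x.2‖ ^ 2 + x.1 2 = 1 + ε → ‖x.2‖ = c x.1 := by
    intro x h1 h2
    have h3 : ‖x.2‖ ^ 2 = 2 * (1 + ε - x.1 2) := by nlinarith
    have h4 := hcsq x.1 h1
    nlinarith [norm_nonneg x.2, (hcpos x.1 h1).le]
  set F : EuclideanSpace ℝ (Fin 3) × EuclideanSpace ℝ (Fin 3) →
      EuclideanSpace ℝ (Fin 3) × EuclideanSpace ℝ (Fin 3) :=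
    fun x => (x.1, (c x.1)⁻¹ • x.2) with hF
  set G : EuclideanSpace ℝ (Fin 3) × EuclideanSpace ℝ (Fin 3) →
      EuclideanSpace ℝ (Fin 3) × EuclideanSpace ℝ (Fin 3) :=
    fun x => (x.1, (c x.1) • x.2) with hG
  have hFmem : ∀ x : EuclideanSpace ℝ (Fin 3) × EuclideanSpace ℝ (Fin 3),
      ‖x.1‖ = 1 ∧ (inner ℝ x.1 x.2 : ℝ) = 0 ∧ (1 / 2) * ‖x.2‖ ^ 2 + x.1 2 = 1 + ε →
      ‖(F x).1‖ = 1 ∧ (inner ℝ (F x).1 (F x).2 : ℝ) = 0 ∧ ‖(F x).2‖ = 1 := by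
    rintro ⟨q, p⟩ ⟨h1, h2, h3⟩
    refine ⟨h1, ?_, ?_⟩
    · simp [hF, inner_smul_right, h2]
    · have hn := hnorm (q, p) h1 h3
      simp only [hF, norm_smul, Real.norm_eq_abs, abs_inv, abs_of_pos (hcpos q h1)]
      rw [hn]
      field_simp [(hcpos q h1).ne']
  have hGmem : ∀ x : EuclideanSpace ℝ (Fin 3) × EuclideanSpace ℝ (Fin 3),
      ‖x.1‖ = 1 ∧ (inner ℝ x.1 x.2 : ℝ) = 0 ∧ ‖x.2‖ = 1 →
      ‖(G x).1‖ = 1 ∧ (inner ℝ (G x).1 (G x).2 : ℝ) = 0 ∧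
        (1 / 2) * ‖(G x).2‖ ^ 2 + (G x).1 2 = 1 + ε := by
    rintro ⟨q, p⟩ ⟨h1, h2, h3⟩
    refine ⟨h1, ?_, ?_⟩
    · simp [hG, inner_smul_right, h2]
    · have hn : ‖c q • p‖ = c q := by
        simp [norm_smul, abs_of_pos (hcpos q h1), h3]
      have h4 := hcsq q h1
      simp only [hG]
      rw [hn]
      nlinarith
  have hccont : Continuous fun x : EuclideanSpace ℝ (Fin 3) × EuclideanSpace ℝ (Fin 3) =>
      c x.1 := by
    exact Real.continuous_sqrt.comp (continuous_const.mul (continuous_const.sub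
      ((EuclideanSpace.proj (2 : Fin 3)).continuous.comp continuous_fst)))
  refine ⟨Homeomorph.mk ⟨fun x => ⟨F x, hFmem x x.2⟩, fun x => ⟨G x, hGmem x x.2⟩, ?_, ?_⟩ ?_ ?_⟩
  · rintro ⟨⟨q, p⟩, h1, h2, h3⟩
    refine Subtype.ext ?_
    simp [hF, hG, smul_smul, (hcpos q h1).ne']
  · rintro ⟨⟨q, p⟩, h1, h2, h3⟩
    refine Subtype.ext ?_
    simp [hF, hG, smul_smul, (hcpos q h1).ne']
  · refine Continuous.subtype_mk ?_ _
    refine ((continuous_fst.comp continuous_subtype_val).prodMk ?_)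
    refine Continuous.smul (Continuous.inv₀ (hccont.comp continuous_subtype_val) ?_)
      (continuous_snd.comp continuous_subtype_val)
    rintro ⟨⟨q, p⟩, h1, h2, h3⟩
    exact (hcpos q h1).ne'
  · refine Continuous.subtype_mk ?_ _
    exact ((continuous_fst.comp continuous_subtype_val).prodMk
      (Continuous.smul (hccont.comp continuous_subtype_val)
        (continuous_snd.comp continuous_subtype_val)))
end
end

section
/- Existence of the asymptotic direction for short-range scattering: let V : ℝⁿ → ℝ be continuously differentiable and suppose there are constants C > 0 and δ > 0 such that |V(q)| ≤ C(1 + ‖q‖)^{−1−δ} and ‖∇V(q)‖ ≤ C(1 + ‖q‖)^{−2−δ} for all q. Let q : [0, ∞) → ℝⁿ be twice continuously differentiable with q″(t) = −∇V(q(t)) for all t, and suppose there are c > 0 and t₀ ≥ 0 with ‖q(t)‖ ≥ c t for all t ≥ t₀. Then the asymptotic direction p̂⁺ = lim_{t→∞} q′(t) exists, and ‖p̂⁺‖² = 2h, where h = (1/2)‖q′(0)‖² + V(q(0)) is the (conserved) energy of the trajectory. -/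
noncomputable section

open Filter MeasureTheory Set Real

/-- Existence of the asymptotic direction for short-range scattering: for a
short-range potential V (decay |V(q)| ≤ C(1+‖q‖)^{-1-δ}, ‖∇V(q)‖ ≤ C(1+‖q‖)^{-2-δ})
and a trajectory q″ = −∇V(q) with ‖q(t)‖ ≥ c t eventually, the asymptotic
direction p̂⁺ = lim_{t→∞} q′(t) exists and ‖p̂⁺‖² = 2h, where
h = (1/2)‖q′(0)‖² + V(q(0)). -/
theorem asymptotic_direction_exists
    (n : ℕ) (V : EuclideanSpace ℝ (Fin n) → ℝ) (hV : ContDiff ℝ 1 V)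
    (C δ : ℝ) (hC : 0 < C) (hδ : 0 < δ)
    (hVdecay : ∀ x : EuclideanSpace ℝ (Fin n), |V x| ≤ C * (1 + ‖x‖) ^ (-(1 + δ)))
    (hgraddecay : ∀ x : EuclideanSpace ℝ (Fin n),
      ‖gradient V x‖ ≤ C * (1 + ‖x‖) ^ (-(2 + δ)))
    (q : ℝ → EuclideanSpace ℝ (Fin n)) (hq : ContDiff ℝ 2 q)
    (hODE : ∀ t : ℝ, 0 ≤ t → deriv (deriv q) t = -gradient V (q t))
    (c t₀ : ℝ) (hc : 0 < c) (ht₀ : 0 ≤ t₀)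
    (hescape : ∀ t : ℝ, t₀ ≤ t → c * t ≤ ‖q t‖) :
    ∃ phat : EuclideanSpace ℝ (Fin n),
      Tendsto (deriv q) atTop (nhds phat) ∧
      ‖phat‖ ^ 2 = 2 * ((1 / 2) * ‖deriv q 0‖ ^ 2 + V (q 0)) := by
  set p := deriv q with hp
  set a := deriv (deriv q) with ha
  have hqd : Differentiable ℝ q := hq.differentiable (by norm_num)
  have hp1 : ContDiff ℝ 1 p := by
    have : ContDiff ℝ (1 + 1 : ℕ) q := by exact_mod_cast hq
    exact (contDiff_succ_iff_deriv.mp this).2.2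
  have hpd : Differentiable ℝ p := hp1.differentiable one_ne_zero
  have hacont : Continuous a := hp1.continuous_deriv le_rfl
  have hVd : Differentiable ℝ V := hV.differentiable one_ne_zero
  have hqderiv : ∀ t, HasDerivAt q (p t) t := fun t => (hqd t).hasDerivAt
  have hpderiv : ∀ t, HasDerivAt p (a t) t := fun t => (hpd t).hasDerivAt
  -- energy
  set E : ℝ → ℝ := fun t => (1 / 2) * (inner ℝ (p t) (p t) : ℝ) + V (q t) with hE
  have hEderiv : ∀ t : ℝ, 0 ≤ t → HasDerivAt E 0 t := by
    intro t ht
    have h1 : HasDerivAt (fun s => (inner ℝ (p s) (p s) : ℝ))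
        ((inner ℝ (p t) (a t) : ℝ) + (inner ℝ (a t) (p t) : ℝ)) t :=
      (hpderiv t).inner ℝ (hpderiv t)
    have h2 : HasDerivAt (fun s => V (q s)) ((inner ℝ (gradient V (q t)) (p t) : ℝ)) t := by
      have hg : HasGradientAt V (gradient V (q t)) (q t) := (hVd (q t)).hasGradientAt
      have := hg.hasFDerivAt.comp_hasDerivAt t (hqderiv t)
      exact this.congr_deriv (by simp [InnerProductSpace.toDual_apply_apply])
    have h3 : HasDerivAt E ((1 / 2 : ℝ) * ((inner ℝ (p t) (a t) : ℝ) + (inner ℝ (a t) (p t) : ℝ))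
        + (inner ℝ (gradient V (q t)) (p t) : ℝ)) t := (h1.const_mul (1 / 2 : ℝ)).add h2
    convert h3 using 1
    have haeq : a t = -gradient V (q t) := hODE t ht
    rw [haeq, inner_neg_right, inner_neg_left, real_inner_comm (gradient V (q t)) (p t)]
    ring
  have hEcont : Continuous E := by
    apply Continuous.add
    · exact continuous_const.mul (Continuous.inner hp1.continuous hp1.continuous)
    · exact (hV.continuous).comp hq.continuous
  have hEconst : ∀ t : ℝ, 0 ≤ t → E t = E 0 := by
    intro t ht
    exact constant_of_has_deriv_right_zero (hEcont.continuousOn)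
      (fun x hx => (hEderiv x hx.1).hasDerivWithinAt) t ⟨ht, le_rfl⟩
  have hnormsq : ∀ t : ℝ, 0 ≤ t → ‖p t‖ ^ 2 = 2 * E 0 - 2 * V (q t) := by
    intro t ht
    have h1 : E t = (1 / 2) * ‖p t‖ ^ 2 + V (q t) := by
      rw [hE]; simp only; rw [real_inner_self_eq_norm_sq]
    have h0 := hEconst t ht
    rw [h1] at h0
    have h2 : ‖p t‖ ^ 2 = 2 * ((1 / 2) * ‖p t‖ ^ 2 + V (q t)) - 2 * V (q t) := by ring
    rw [h0] at h2
    exact h2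
  -- integrability of the force along the trajectory
  set T : ℝ := max t₀ 1 with hT
  have hT0 : (0 : ℝ) < T := lt_of_lt_of_le one_pos (le_max_right _ _)
  have hTt₀ : t₀ ≤ T := le_max_left _ _
  have hq_lb : ∀ t : ℝ, T ≤ t → 0 < c * t ∧ c * t ≤ 1 + ‖q t‖ := by
    intro t htT
    have htpos : 0 < t := lt_of_lt_of_le hT0 htT
    refine ⟨mul_pos hc htpos, ?_⟩
    have := hescape t (le_trans hTt₀ htT)
    have : c * t ≤ ‖q t‖ := this
    linarith [norm_nonneg (q t)]
  have hbound : ∀ t : ℝ, T ≤ t → ‖a t‖ ≤ C * c ^ (-(2 + δ)) * t ^ (-(2 + δ)) := by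
    intro t htT
    have htpos : 0 < t := lt_of_lt_of_le hT0 htT
    obtain ⟨hct, hle⟩ := hq_lb t htT
    have h0t : (0 : ℝ) ≤ t := htpos.le
    have haeq : a t = -gradient V (q t) := hODE t (le_trans hT0.le htT)
    rw [haeq, norm_neg]
    calc ‖gradient V (q t)‖ ≤ C * (1 + ‖q t‖) ^ (-(2 + δ)) := hgraddecay (q t)
      _ ≤ C * (c * t) ^ (-(2 + δ)) := by
          apply mul_le_mul_of_nonneg_left _ hC.le
          exact rpow_le_rpow_of_nonpos hct hle (by linarith)
      _ = C * c ^ (-(2 + δ)) * t ^ (-(2 + δ)) := by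
          rw [mul_rpow hc.le h0t, mul_assoc]
  have hInt : IntegrableOn a (Ioi T) := by
    have hmaj : IntegrableOn (fun t : ℝ => C * c ^ (-(2 + δ)) * t ^ (-(2 + δ))) (Ioi T) :=
      (integrableOn_Ioi_rpow_of_lt (by linarith) hT0).const_mul _
    refine hmaj.mono' (hacont.aestronglyMeasurable.restrict) ?_
    rw [ae_restrict_iff' measurableSet_Ioi]
    exact ae_of_all _ fun t ht => hbound t (le_of_lt ht)
  -- FTC and convergence of p
  have hFTC : ∀ t : ℝ, p t = p T + ∫ s in T..t, a s := by
    intro t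
    have := intervalIntegral.integral_eq_sub_of_hasDerivAt
      (f := p) (f' := a) (a := T) (b := t) (fun x _ => hpderiv x)
      (hacont.intervalIntegrable T t)
    rw [this]
    abel
  set phat : EuclideanSpace ℝ (Fin n) := p T + ∫ s in Ioi T, a s with hphat
  have htend : Tendsto p atTop (nhds phat) := by
    have h1 : Tendsto (fun t : ℝ => p T + ∫ s in T..t, a s) atTop (nhds phat) :=
      tendsto_const_nhds.add (intervalIntegral_tendsto_integral_Ioi T hInt tendsto_id)
    exact Tendsto.congr (fun t => (hFTC t).symm) h1
  -- V (q t) → 0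
  have hVlim : Tendsto (fun t : ℝ => V (q t)) atTop (nhds 0) := by
    apply squeeze_zero_norm'
    · filter_upwards [eventually_ge_atTop T] with t htT
      obtain ⟨hct, hle⟩ := hq_lb t htT
      calc ‖V (q t)‖ = |V (q t)| := rfl
        _ ≤ C * (1 + ‖q t‖) ^ (-(1 + δ)) := hVdecay (q t)
        _ ≤ C * (c * t) ^ (-(1 + δ)) := by
            apply mul_le_mul_of_nonneg_left _ hC.le
            exact rpow_le_rpow_of_nonpos hct hle (by linarith)
    · have h2 : Tendsto (fun t : ℝ => C * (c * t) ^ (-(1 + δ))) atTop (nhds (C * 0)) := by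
        apply Tendsto.const_mul C
        exact (tendsto_rpow_neg_atTop (by linarith)).comp
          (Tendsto.const_mul_atTop hc tendsto_id)
      simpa using h2
  -- identify the norm of phat
  have hnlim : Tendsto (fun t : ℝ => ‖p t‖ ^ 2) atTop (nhds (‖phat‖ ^ 2)) :=
    (htend.norm).pow 2
  have hnlim2 : Tendsto (fun t : ℝ => ‖p t‖ ^ 2) atTop (nhds (2 * E 0)) := by
    have h2 : Tendsto (fun t : ℝ => 2 * E 0 - 2 * V (q t)) atTop (nhds (2 * E 0)) := by
      have h3 : Tendsto (fun t : ℝ => 2 * E 0 - 2 * V (q t)) atTop (nhds (2 * E 0 - 2 * 0)) :=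
        Tendsto.sub tendsto_const_nhds (hVlim.const_mul (2 : ℝ))
      simpa using h3
    apply h2.congr'
    filter_upwards [eventually_ge_atTop (0 : ℝ)] with t ht
    exact (hnormsq t ht).symm
  have hkey : ‖phat‖ ^ 2 = 2 * E 0 := tendsto_nhds_unique hnlim hnlim2
  refine ⟨phat, htend, ?_⟩
  rw [hkey]
  congr 1
  rw [hE]
  simp only
  rw [real_inner_self_eq_norm_sq]
end
end

section
/- Existence of the impact parameter for short-range scattering: let V : ℝⁿ → ℝ be continuously differentiable and suppose there are constants C > 0 and δ > 0 such that |V(q)| ≤ C(1 + ‖q‖)^{−1−δ} and ‖∇V(q)‖ ≤ C(1 + ‖q‖)^{−2−δ} for all q. Let q : [0, ∞) → ℝⁿ be twice continuously differentiable with q″(t) = −∇V(q(t)) for all t, suppose there are c > 0 and t₀ ≥ 0 with ‖q(t)‖ ≥ c t for all t ≥ t₀, and suppose the energy h = (1/2)‖q′(0)‖² + V(q(0)) is positive. Then, with p̂⁺ = lim_{t→∞} q′(t), the impact parameter q⊥⁺ = lim_{t→∞} [ q(t) − (⟨q(t), p̂⁺⟩ / (2h)) p̂⁺ ] exists. -/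
noncomputable section

open Filter MeasureTheory Set

lemma my_tendsto_of_hasDerivAt_integrable {E : Type*} [NormedAddCommGroup E]
    [NormedSpace ℝ E] [CompleteSpace E]
    {f f' : ℝ → E} {a : ℝ} (hderiv : ∀ x, HasDerivAt f (f' x) x) (hcont : Continuous f')
    (hint : IntegrableOn f' (Set.Ioi a)) :
    Tendsto f atTop (nhds (f a + ∫ x in Set.Ioi a, f' x)) := by
  have h1 := MeasureTheory.intervalIntegral_tendsto_integral_Ioi a hint tendsto_id
  have h2 : Tendsto (fun t => f a + ∫ x in a..t, f' x) atTop
      (nhds (f a + ∫ x in Set.Ioi a, f' x)) := tendsto_const_nhds.add h1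
  refine h2.congr' ?_
  filter_upwards [eventually_ge_atTop a] with t ht
  rw [intervalIntegral.integral_eq_sub_of_hasDerivAt (fun s _ => hderiv s)
    (hcont.intervalIntegrable a t)]
  abel

lemma my_rpow_hasDerivAt {c e : ℝ} (hc : 0 < c) (he : 0 < e) {s : ℝ} (hs : 0 ≤ s) :
    HasDerivAt (fun u => -(1/(c*e)) * (1 + c*u) ^ (-e)) ((1 + c*s) ^ (-(1+e))) s := by
  have h1 : HasDerivAt (fun u : ℝ => 1 + c*u) c s := by
    simpa using ((hasDerivAt_id s).const_mul c).const_add 1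
  have hpos : 0 < 1 + c*s := by nlinarith
  have h2 := h1.rpow_const (p := -e) (Or.inl hpos.ne')
  have h3 := h2.const_mul (-(1/(c*e)))
  refine h3.congr_deriv ?_
  rw [show -e - 1 = -(1+e) by ring]
  field_simp

lemma my_rpow_tendsto {c e : ℝ} (hc : 0 < c) (he : 0 < e) :
    Tendsto (fun u : ℝ => -(1/(c*e)) * (1 + c*u) ^ (-e)) atTop (nhds 0) := by
  have h1 : Tendsto (fun u : ℝ => 1 + c*u) atTop atTop :=
    tendsto_atTop_add_const_left _ 1 (tendsto_id.const_mul_atTop hc)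
  have h2 := (tendsto_rpow_neg_atTop he).comp h1
  have h3 := h2.const_mul (-(1/(c*e)))
  simpa using h3

lemma my_rpow_integrableOn {c e t : ℝ} (hc : 0 < c) (he : 0 < e) (ht : 0 ≤ t) :
    IntegrableOn (fun s => (1 + c*s) ^ (-(1+e))) (Set.Ioi t) := by
  refine integrableOn_Ioi_deriv_of_nonneg' (g := fun u => -(1/(c*e)) * (1 + c*u) ^ (-e))
    (fun x hx => my_rpow_hasDerivAt hc he (ht.trans hx)) (fun x hx => ?_) (my_rpow_tendsto hc he)
  have : (0:ℝ) < 1 + c*x := by nlinarith [ht.trans_lt hx]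
  positivity

lemma my_rpow_integral {c e t : ℝ} (hc : 0 < c) (he : 0 < e) (ht : 0 ≤ t) :
    ∫ s in Set.Ioi t, (1 + c*s) ^ (-(1+e)) = (1/(c*e)) * (1 + c*t) ^ (-e) := by
  rw [integral_Ioi_of_hasDerivAt_of_tendsto' (m := 0)
    (fun x hx => my_rpow_hasDerivAt hc he (ht.trans hx)) (my_rpow_integrableOn hc he ht)
    (my_rpow_tendsto hc he)]
  ring

/-- Existence of the impact parameter for short-range scattering: under the
short-range decay assumptions on V, for a trajectory q″ = −∇V(q) with
‖q(t)‖ ≥ c t eventually and positive energy h = (1/2)‖q′(0)‖² + V(q(0)),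
the asymptotic direction p̂⁺ = lim_{t→∞} q′(t) exists and the impact parameter
q⊥⁺ = lim_{t→∞} [q(t) − (⟨q(t), p̂⁺⟩/(2h)) p̂⁺] exists. -/
theorem impact_parameter_exists
    (n : ℕ) (V : EuclideanSpace ℝ (Fin n) → ℝ) (hV : ContDiff ℝ 1 V)
    (C δ : ℝ) (hC : 0 < C) (hδ : 0 < δ)
    (hVdecay : ∀ x : EuclideanSpace ℝ (Fin n), |V x| ≤ C * (1 + ‖x‖) ^ (-(1 + δ)))
    (hgraddecay : ∀ x : EuclideanSpace ℝ (Fin n),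
      ‖gradient V x‖ ≤ C * (1 + ‖x‖) ^ (-(2 + δ)))
    (q : ℝ → EuclideanSpace ℝ (Fin n)) (hq : ContDiff ℝ 2 q)
    (hODE : ∀ t : ℝ, 0 ≤ t → deriv (deriv q) t = -gradient V (q t))
    (c t₀ : ℝ) (hc : 0 < c) (ht₀ : 0 ≤ t₀)
    (hescape : ∀ t : ℝ, t₀ ≤ t → c * t ≤ ‖q t‖)
    (h : ℝ) (hh : h = (1 / 2) * ‖deriv q 0‖ ^ 2 + V (q 0)) (hpos : 0 < h) :
    ∃ phat qperp : EuclideanSpace ℝ (Fin n),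
      Tendsto (deriv q) atTop (nhds phat) ∧
      Tendsto (fun t : ℝ => q t - ((inner ℝ (q t) phat : ℝ) / (2 * h)) • phat)
        atTop (nhds qperp) := by
  -- unpack smoothness
  have hq2 : ContDiff ℝ (1+1) q := by exact_mod_cast hq
  obtain ⟨hdq, -, hq1⟩ := contDiff_succ_iff_deriv.mp hq2
  obtain ⟨hdp, hAcont⟩ := contDiff_one_iff_deriv.mp hq1
  set A := deriv (deriv q) with hA
  set p := deriv q with hp
  have h2h : (2*h) ≠ 0 := by positivity
  have hδ1 : (0:ℝ) < 1 + δ := by linarith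
  have hVd : Differentiable ℝ V := hV.differentiable (by norm_num)
  -- bound on the acceleration
  have hAbound : ∀ s, t₀ ≤ s → ‖A s‖ ≤ C * (1 + c*s) ^ (-(1+(1+δ))) := by
    intro s hs
    have hs0 : 0 ≤ s := ht₀.trans hs
    rw [hODE s hs0, norm_neg]
    calc ‖gradient V (q s)‖ ≤ C * (1+‖q s‖) ^ (-(2+δ)) := hgraddecay _
      _ ≤ C * (1 + c*s) ^ (-(2+δ)) := by
          refine mul_le_mul_of_nonneg_left ?_ hC.le
          refine Real.rpow_le_rpow_of_nonpos (by nlinarith) ?_ (by linarith)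
          have := hescape s hs; linarith
      _ = C * (1 + c*s) ^ (-(1+(1+δ))) := by rw [show (-(1+(1+δ)):ℝ) = -(2+δ) by ring]
  have hAint : IntegrableOn A (Set.Ioi t₀) := by
    refine Integrable.mono' ((my_rpow_integrableOn hc hδ1 ht₀).const_mul C)
      hAcont.aestronglyMeasurable ?_
    filter_upwards [self_mem_ae_restrict measurableSet_Ioi] with s hs
    exact hAbound s hs.le
  set phat := p t₀ + ∫ s in Set.Ioi t₀, A s with hphat
  have hAderiv : ∀ x, HasDerivAt p (A x) x := fun x => (hdp x).hasDerivAt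
  have hptend : Tendsto p atTop (nhds phat) :=
    my_tendsto_of_hasDerivAt_integrable hAderiv hAcont hAint
  -- quantitative bound on p - phat
  set K := C * (1/(c*(1+δ))) with hK
  have hrbound : ∀ t, t₀ ≤ t → ‖p t - phat‖ ≤ K * (1 + c*t) ^ (-(1+δ)) := by
    intro t htt
    have ht0 : 0 ≤ t := ht₀.trans htt
    have hint' : IntegrableOn A (Set.Ioi t) := hAint.mono_set (Set.Ioi_subset_Ioi htt)
    have heq : ∫ s in Set.Ioi t, A s = phat - p t :=
      integral_Ioi_of_hasDerivAt_of_tendsto' (fun x _ => hAderiv x) hint' hptend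
    have hswap : ‖p t - phat‖ = ‖∫ s in Set.Ioi t, A s‖ := by rw [heq, norm_sub_rev]
    rw [hswap]
    calc ‖∫ s in Set.Ioi t, A s‖ ≤ ∫ s in Set.Ioi t, ‖A s‖ := norm_integral_le_integral_norm _
      _ ≤ ∫ s in Set.Ioi t, C * (1 + c*s) ^ (-(1+(1+δ))) := by
          refine setIntegral_mono_on hint'.norm
            ((my_rpow_integrableOn hc hδ1 ht0).const_mul C) measurableSet_Ioi ?_
          intro s hs; exact hAbound s (htt.trans hs.le)
      _ = K * (1+c*t)^(-(1+δ)) := by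
          rw [MeasureTheory.integral_const_mul, my_rpow_integral hc hδ1 ht0, hK]; ring
  -- energy conservation
  set En : ℝ → ℝ := fun t => (1/2) * (inner ℝ (p t) (p t) : ℝ) + V (q t) with hEdef
  have hEderiv : ∀ t, 0 ≤ t → HasDerivAt En 0 t := by
    intro t ht
    have h1 : HasDerivAt (fun u => (inner ℝ (p u) (p u) : ℝ))
        ((inner ℝ (p t) (A t) : ℝ) + (inner ℝ (A t) (p t) : ℝ)) t :=
      HasDerivAt.inner ℝ (hAderiv t) (hAderiv t)
    have h2 : HasDerivAt (fun u => V (q u)) ((inner ℝ (gradient V (q t)) (p t) : ℝ)) t := by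
      have := ((hVd (q t)).hasGradientAt.hasFDerivAt).comp_hasDerivAt t ((hdq t).hasDerivAt)
      refine this.congr_deriv ?_
      simp [InnerProductSpace.toDual_apply_apply]
      rfl
    have h3 := (h1.const_mul (1/2:ℝ)).add h2
    refine h3.congr_deriv ?_
    rw [hODE t ht]
    simp only [inner_neg_left, inner_neg_right]
    have := real_inner_comm (p t) (gradient V (q t))
    linarith
  have hEconst : ∀ t, 0 ≤ t → En t = En 0 := by
    intro t ht
    have hcontE : ContinuousOn En (Set.Icc 0 t) := by
      apply Continuous.continuousOn
      exact (continuous_const.mul ((hq1.continuous).inner (hq1.continuous))).add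
        (hV.continuous.comp (hq.continuous))
    exact constant_of_has_deriv_right_zero hcontE
      (fun x hx => (hEderiv x hx.1).hasDerivWithinAt) t ⟨ht, le_rfl⟩
  have hE0 : En 0 = h := by
    rw [hEdef]; simp only [real_inner_self_eq_norm_sq]; rw [hh]
  -- V along the trajectory tends to 0
  have hdecay_tendsto : Tendsto (fun t : ℝ => C * (1+c*t)^(-(1+δ))) atTop (nhds 0) := by
    have h1 : Tendsto (fun u : ℝ => 1 + c*u) atTop atTop :=
      tendsto_atTop_add_const_left _ 1 (tendsto_id.const_mul_atTop hc)
    have h2 := ((tendsto_rpow_neg_atTop hδ1).comp h1).const_mul C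
    simpa using h2
  have hVto : Tendsto (fun t => V (q t)) atTop (nhds 0) := by
    refine squeeze_zero_norm' ?_ hdecay_tendsto
    filter_upwards [eventually_ge_atTop t₀] with t htt
    calc ‖V (q t)‖ = |V (q t)| := rfl
      _ ≤ C * (1+‖q t‖)^(-(1+δ)) := hVdecay _
      _ ≤ C * (1+c*t)^(-(1+δ)) := by
          refine mul_le_mul_of_nonneg_left ?_ hC.le
          refine Real.rpow_le_rpow_of_nonpos ?_ ?_ (by linarith)
          · nlinarith [ht₀.trans htt]
          · have := hescape t htt; linarith
  have hinner : Tendsto (fun t => (inner ℝ (p t) (p t) : ℝ)) atTop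
      (nhds (inner ℝ phat phat : ℝ)) := hptend.inner hptend
  have hkey : (inner ℝ phat phat : ℝ) = 2*h := by
    have l1 : Tendsto (fun t => (1/2) * (inner ℝ (p t) (p t) : ℝ)) atTop
        (nhds ((1/2) * (inner ℝ phat phat : ℝ))) := hinner.const_mul _
    have l2 : Tendsto (fun t => h - V (q t)) atTop (nhds (h - 0)) :=
      tendsto_const_nhds.sub hVto
    have l3 : (fun t => (1/2) * (inner ℝ (p t) (p t) : ℝ)) =ᶠ[atTop]
        (fun t => h - V (q t)) := by
      filter_upwards [eventually_ge_atTop (0:ℝ)] with t ht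
      have := hEconst t ht
      rw [hE0] at this
      simp only [hEdef] at this
      linarith
    have := tendsto_nhds_unique (l1.congr' l3) l2
    rw [sub_zero] at this
    linarith
  -- the impact parameter
  set f : ℝ → EuclideanSpace ℝ (Fin n) :=
    fun t => q t - ((inner ℝ (q t) phat : ℝ)/(2*h)) • phat with hfdef
  set f' : ℝ → EuclideanSpace ℝ (Fin n) :=
    fun t => p t - ((inner ℝ (p t) phat : ℝ)/(2*h)) • phat with hf'def
  have hfderiv : ∀ t, HasDerivAt f (f' t) t := by
    intro t
    have h1 : HasDerivAt (fun u => (inner ℝ (q u) phat : ℝ)) ((inner ℝ (p t) phat : ℝ)) t := by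
      have := HasDerivAt.inner ℝ ((hdq t).hasDerivAt) (hasDerivAt_const t phat)
      simpa using this
    exact ((hdq t).hasDerivAt).sub ((h1.div_const (2*h)).smul_const phat)
  have hf'cont : Continuous f' := by
    exact (hq1.continuous).sub
      ((((hq1.continuous).inner (𝕜 := ℝ) continuous_const).div_const _).smul continuous_const)
  have hphn : ‖phat‖^2 = 2*h := by rw [← real_inner_self_eq_norm_sq, hkey]
  have hf'bound : ∀ t, t₀ ≤ t → ‖f' t‖ ≤ (2*K) * (1+c*t)^(-(1+δ)) := by
    intro t htt
    have hr := hrbound t htt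
    have e1 : f' t = (p t - phat) - ((inner ℝ (p t - phat) phat : ℝ)/(2*h)) • phat := by
      have hi : (inner ℝ (p t) phat : ℝ) = (inner ℝ (p t - phat) phat : ℝ) + 2*h := by
        rw [inner_sub_left]; linarith
      simp only [hf'def, hi, add_div, div_self h2h, add_smul, one_smul]
      abel
    rw [e1]
    set r := p t - phat
    have h4 : |(inner ℝ r phat : ℝ)| ≤ ‖r‖ * ‖phat‖ := abs_real_inner_le_norm _ _
    have hb1 : ‖((inner ℝ r phat : ℝ)/(2*h)) • phat‖ ≤ ‖r‖ := by
      rw [norm_smul, Real.norm_eq_abs, abs_div, abs_of_pos (by positivity : (0:ℝ) < 2*h),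
        div_mul_eq_mul_div, div_le_iff₀ (by positivity : (0:ℝ) < 2*h)]
      have h6 := mul_le_mul_of_nonneg_right h4 (norm_nonneg phat)
      have h7 : ‖r‖*‖phat‖*‖phat‖ = ‖r‖*(2*h) := by rw [← hphn]; ring
      linarith
    calc ‖r - ((inner ℝ r phat : ℝ)/(2*h)) • phat‖
        ≤ ‖r‖ + ‖((inner ℝ r phat : ℝ)/(2*h)) • phat‖ := norm_sub_le _ _
      _ ≤ ‖r‖ + ‖r‖ := by linarith
      _ ≤ (2*K) * (1+c*t)^(-(1+δ)) := by linarith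
  have hf'int : IntegrableOn f' (Set.Ioi t₀) := by
    refine Integrable.mono' ((my_rpow_integrableOn hc hδ ht₀).const_mul (2*K))
      hf'cont.aestronglyMeasurable ?_
    filter_upwards [self_mem_ae_restrict measurableSet_Ioi] with s hs
    exact hf'bound s hs.le
  exact ⟨phat, f t₀ + ∫ s in Set.Ioi t₀, f' s, hptend,
    my_tendsto_of_hasDerivAt_integrable hfderiv hf'cont hf'int⟩
end
end
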